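/- For every p ≥ 1 and all x, y ∈ [0,1]^p with x + y ≠ 0, Δ_DML1(x,y) ≤ Δ_DML2(x,y). -/

import Mathlib

open Finset

/-- The L¹ norm of a vector. -/
noncomputable def l1 {p : ℕ} (z : Fin p → ℝ) : ℝ := ∑ i, |z i|

/-- The first Dice semimetric loss. -/
noncomputable def DML1 {p : ℕ} (x y : Fin p → ℝ) : ℝ :=
  1 - (l1 (x + y) - l1 (x - y)) / l1 (x + y)

/-- The second Dice semimetric loss. -/
noncomputable def DML2 {p : ℕ} (x y : Fin p → ℝ) : ℝ :=
  1 - 2 * l1 (x * y) / (2 * l1 (x * y) + l1 (x - y))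

/-- Theorem 3: the first Dice semimetric loss never exceeds the second. -/
theorem dml1_le_dml2 {p : ℕ} (hp : 1 ≤ p) (x y : Fin p → ℝ)
    (hx : ∀ i, 0 ≤ x i ∧ x i ≤ 1) (hy : ∀ i, 0 ≤ y i ∧ y i ≤ 1)
    (hxy0 : x + y ≠ 0) :
    DML1 x y ≤ DML2 x y := by
  have hS : 0 < l1 (x + y) := by
    obtain ⟨i, hi⟩ : ∃ i, (x + y) i ≠ 0 := by
      by_contra h; push_neg at h; exact hxy0 (funext h)
    exact Finset.sum_pos' (fun j _ => abs_nonneg _) ⟨i, mem_univ i, abs_pos.2 hi⟩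
  have hP : 0 ≤ l1 (x * y) := Finset.sum_nonneg fun i _ => abs_nonneg _
  have hD : 0 ≤ l1 (x - y) := Finset.sum_nonneg fun i _ => abs_nonneg _
  have hkey : 2 * l1 (x * y) + l1 (x - y) ≤ l1 (x + y) := by
    unfold l1
    rw [Finset.mul_sum, ← Finset.sum_add_distrib]
    apply Finset.sum_le_sum
    intro i _
    obtain ⟨hx0, hx1⟩ := hx i
    obtain ⟨hy0, hy1⟩ := hy i
    simp only [Pi.add_apply, Pi.sub_apply, Pi.mul_apply]
    rw [abs_of_nonneg (mul_nonneg hx0 hy0), abs_of_nonneg (add_nonneg hx0 hy0)]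
    rcases abs_cases (x i - y i) with ⟨h, _⟩ | ⟨h, _⟩ <;> rw [h] <;> nlinarith
  unfold DML1 DML2
  have e1 : 1 - (l1 (x + y) - l1 (x - y)) / l1 (x + y) = l1 (x - y) / l1 (x + y) := by
    field_simp
    ring
  rw [e1]
  rcases eq_or_lt_of_le (by positivity : (0:ℝ) ≤ 2 * l1 (x * y) + l1 (x - y)) with h0 | h0
  · have hD0 : l1 (x - y) = 0 := by nlinarith
    have hP0 : l1 (x * y) = 0 := by nlinarith
    rw [hD0, hP0]
    norm_num
  · have e2 : 1 - 2 * l1 (x * y) / (2 * l1 (x * y) + l1 (x - y))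
        = l1 (x - y) / (2 * l1 (x * y) + l1 (x - y)) := by
      field_simp
      ring
    rw [e2]
    exact div_le_div_of_nonneg_left hD h0 hkey
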